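/- arXiv:hep-th/0011174 — 2 statements merged into one kernel-verified Lean document; each statement's English description precedes it below -/
import Mathlib

section
/- For every A ∈ SL(2,ℂ) there exists a unique real 4×4 matrix Λ(A) satisfying S(A)⁻¹ γ^μ S(A) = Σ_{ν=0}^{3} Λ(A)^μ_ν γ^ν for all μ ∈ {0,1,2,3}; this Λ(A) satisfies Λ(A)ᵀ η Λ(A) = η (i.e. it is a Lorentz transformation), and the assignment A ↦ Λ(A) is a group homomorphism: Λ(AB) = Λ(A)Λ(B). -/
open Matrix

noncomputable section

/-- Gamma matrices in the chiral representation. -/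
def γ : Fin 4 → Matrix (Fin 4) (Fin 4) ℂ :=
  ![!![0, 0, 1, 0; 0, 0, 0, 1; 1, 0, 0, 0; 0, 1, 0, 0],
    !![0, 0, 0, -1; 0, 0, -1, 0; 0, 1, 0, 0; 1, 0, 0, 0],
    !![0, 0, 0, Complex.I; 0, 0, -Complex.I, 0; 0, -Complex.I, 0, 0; Complex.I, 0, 0, 0],
    !![0, 0, -1, 0; 0, 0, 0, 1; 1, 0, 0, 0; 0, -1, 0, 0]]

/-- The Minkowski metric η = diag(1,−1,−1,−1) as a real 4×4 matrix. -/
def ηR : Matrix (Fin 4) (Fin 4) ℝ := Matrix.diagonal ![1, -1, -1, -1]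

/-- The spinor representation S(A) = [[A,0],[0,(A†)⁻¹]] of SL(2,ℂ) on ℂ⁴. -/
def Smap (A : Matrix.SpecialLinearGroup (Fin 2) ℂ) : Matrix (Fin 4) (Fin 4) ℂ :=
  Matrix.reindex finSumFinEquiv finSumFinEquiv
    (Matrix.fromBlocks (A : Matrix (Fin 2) (Fin 2) ℂ) 0 0 (((A : Matrix (Fin 2) (Fin 2) ℂ)ᴴ)⁻¹))

/-- The defining relation of the Lorentz matrix Λ(A) associated to A ∈ SL(2,ℂ):
`S(A)⁻¹ γ^μ S(A) = Σ_ν Λ^μ_ν γ^ν`. -/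
def LorentzRel (A : Matrix.SpecialLinearGroup (Fin 2) ℂ) (Λ : Matrix (Fin 4) (Fin 4) ℝ) : Prop :=
  ∀ μ : Fin 4, (Smap A)⁻¹ * γ μ * Smap A = ∑ ν : Fin 4, ((Λ μ ν : ℝ) : ℂ) • γ ν

namespace CovAux


abbrev M2 := Matrix (Fin 2) (Fin 2) ℂ

def σv : Fin 4 → M2 :=
  ![1, !![0,1;1,0], !![0,-Complex.I; Complex.I,0], !![1,0;0,-1]]

lemma e0 : (finSumFinEquiv (m:=2) (n:=2)).symm 0 = Sum.inl 0 := rfl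
lemma e1 : (finSumFinEquiv (m:=2) (n:=2)).symm 1 = Sum.inl 1 := rfl
lemma e2 : (finSumFinEquiv (m:=2) (n:=2)).symm 2 = Sum.inr 0 := rfl
lemma e3 : (finSumFinEquiv (m:=2) (n:=2)).symm 3 = Sum.inr 1 := rfl

lemma gamma_block (μ : Fin 4) : γ μ = Matrix.reindex finSumFinEquiv finSumFinEquiv
    (Matrix.fromBlocks 0 (Matrix.adjugate (σv μ)) (σv μ) 0) := by
  fin_cases μ <;>
    · ext i j
      fin_cases i <;> fin_cases j <;>
        simp [γ, σv, Matrix.adjugate_fin_two, Matrix.fromBlocks, Matrix.one_apply,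
          e0, e1, e2, e3, Matrix.vecHead, Matrix.vecTail]

lemma σherm (μ : Fin 4) : (σv μ)ᴴ = σv μ := by
  fin_cases μ <;>
    · ext i j
      fin_cases i <;> fin_cases j <;>
        simp [σv, Matrix.conjTranspose_apply, Matrix.one_apply]

lemma reindex_mul (M N : Matrix (Fin 2 ⊕ Fin 2) (Fin 2 ⊕ Fin 2) ℂ) :
    Matrix.reindex finSumFinEquiv finSumFinEquiv M *
      Matrix.reindex finSumFinEquiv finSumFinEquiv N =
      Matrix.reindex finSumFinEquiv finSumFinEquiv (M * N) := by
  simp [Matrix.reindex_apply, Matrix.submatrix_mul_equiv]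

lemma detA (A : Matrix.SpecialLinearGroup (Fin 2) ℂ) :
    (A : M2).det = 1 := A.2

lemma detAH (A : Matrix.SpecialLinearGroup (Fin 2) ℂ) :
    ((A : M2)ᴴ).det = 1 := by
  rw [Matrix.det_conjTranspose, detA]; simp

lemma adj_eq_inv (M : M2) (h : M.det = 1) : M.adjugate = M⁻¹ := by
  rw [Matrix.inv_def, h]; simp

lemma Smap_inv (A : Matrix.SpecialLinearGroup (Fin 2) ℂ) :
    (Smap A)⁻¹ = Matrix.reindex finSumFinEquiv finSumFinEquiv
      (Matrix.fromBlocks ((A : M2)⁻¹) 0 0 ((A : M2)ᴴ)) := by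
  apply Matrix.inv_eq_left_inv
  rw [Smap, reindex_mul, Matrix.fromBlocks_multiply]
  have h1 : (A : M2)⁻¹ * (A : M2) = 1 :=
    Matrix.nonsing_inv_mul _ (by rw [detA]; exact isUnit_one)
  have h2 : (A : M2)ᴴ * ((A : M2)ᴴ)⁻¹ = 1 :=
    Matrix.mul_nonsing_inv _ (by rw [detAH]; exact isUnit_one)
  simp [h1, h2, Matrix.fromBlocks_one]

lemma conj_eq (A : Matrix.SpecialLinearGroup (Fin 2) ℂ) (μ : Fin 4) :
    (Smap A)⁻¹ * γ μ * Smap A =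
      Matrix.reindex finSumFinEquiv finSumFinEquiv
        (Matrix.fromBlocks 0 (Matrix.adjugate ((A : M2)ᴴ * σv μ * (A : M2)))
          ((A : M2)ᴴ * σv μ * (A : M2)) 0) := by
  rw [Smap_inv, gamma_block, Smap, reindex_mul, reindex_mul]
  congr 1
  rw [Matrix.fromBlocks_multiply, Matrix.fromBlocks_multiply]
  have hadj : Matrix.adjugate ((A : M2)ᴴ * σv μ * (A : M2)) =
      (A : M2)⁻¹ * Matrix.adjugate (σv μ) * ((A : M2)ᴴ)⁻¹ := by
    rw [Matrix.adjugate_mul_distrib, Matrix.adjugate_mul_distrib,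
      adj_eq_inv _ (detA A), adj_eq_inv _ (detAH A), Matrix.mul_assoc]
  rw [hadj]
  simp [Matrix.mul_assoc]




def coeffs (H : M2) : Fin 4 → ℝ :=
  ![((H 0 0).re + (H 1 1).re)/2, (H 1 0).re, (H 1 0).im, ((H 0 0).re - (H 1 1).re)/2]

lemma block_eq_sum (H : M2) (hH : Hᴴ = H) :
    Matrix.reindex finSumFinEquiv finSumFinEquiv
        (Matrix.fromBlocks 0 (Matrix.adjugate H) H 0)
      = ∑ ν : Fin 4, ((coeffs H ν : ℝ) : ℂ) • γ ν := by
  have h00 : (H 0 0).im = 0 := by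
    have := congrFun (congrFun hH 0) 0
    simp [Matrix.conjTranspose_apply, Complex.ext_iff] at this
    linarith
  have h11 : (H 1 1).im = 0 := by
    have := congrFun (congrFun hH 1) 1
    simp [Matrix.conjTranspose_apply, Complex.ext_iff] at this
    linarith
  have h01 : H 0 1 = (starRingEnd ℂ) (H 1 0) := by
    have := congrFun (congrFun hH 1) 0
    rw [Matrix.conjTranspose_apply] at this
    rw [← this]
    simp
  ext i j
  fin_cases i <;> fin_cases j <;>
    simp only [Matrix.sum_apply, Matrix.smul_apply, Fin.sum_univ_four]
  all_goals try simp [coeffs, γ, Matrix.adjugate_fin_two, Matrix.fromBlocks, h01,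
      e0, e1, e2, e3, Matrix.vecHead, Matrix.vecTail, smul_eq_mul]
  all_goals try (apply Complex.ext <;> simp [h00, h11] <;> try ring)





lemma rows_eq (c d : Fin 4 → ℝ)
    (h : ∑ ν : Fin 4, ((c ν : ℝ) : ℂ) • γ ν = ∑ ν : Fin 4, ((d ν : ℝ) : ℂ) • γ ν) :
    c = d := by
  have h20 := congrFun (congrFun h 2) 0
  have h31 := congrFun (congrFun h 3) 1
  have h30 := congrFun (congrFun h 3) 0
  simp only [Matrix.sum_apply, Matrix.smul_apply, Fin.sum_univ_four] at h20 h31 h30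
  simp [γ, smul_eq_mul, Complex.ext_iff] at h20 h31 h30
  funext ν
  fin_cases ν <;> simp <;> linarith [h20, h31, h30.1, h30.2]

lemma trγγ (μ ν : Fin 4) :
    Matrix.trace (γ μ * γ ν) = ((4 * ηR μ ν : ℝ) : ℂ) := by
  fin_cases μ <;> fin_cases ν <;>
    simp [γ, ηR, Matrix.trace, Matrix.diag, Matrix.mul_apply, Fin.sum_univ_four,
        Matrix.diagonal, Matrix.vecHead, Matrix.vecTail]
  all_goals norm_num [Complex.ext_iff]

lemma detS (A : Matrix.SpecialLinearGroup (Fin 2) ℂ) : (Smap A).det = 1 := by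
  rw [Smap, Matrix.det_reindex_self, Matrix.det_fromBlocks_zero₁₂, detA,
    Matrix.det_nonsing_inv, detAH]
  simp

lemma S_mul_Sinv (A : Matrix.SpecialLinearGroup (Fin 2) ℂ) :
    Smap A * (Smap A)⁻¹ = 1 :=
  Matrix.mul_nonsing_inv _ (by rw [detS]; exact isUnit_one)




lemma etaeta : ηR * ηR = 1 := by
  ext i j
  fin_cases i <;> fin_cases j <;>
    simp [ηR, Matrix.mul_apply, Matrix.diagonal, Fin.sum_univ_four, Matrix.one_apply,
      Matrix.vecHead, Matrix.vecTail]

lemma lorentz_fwd (A : Matrix.SpecialLinearGroup (Fin 2) ℂ)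
    (Λ : Matrix (Fin 4) (Fin 4) ℝ) (h : LorentzRel A Λ) : Λ * ηR * Λᵀ = ηR := by
  have hS := S_mul_Sinv A
  ext μ ν
  have e1 : (Smap A)⁻¹ * γ μ * Smap A * ((Smap A)⁻¹ * (γ ν * Smap A)) =
      (Smap A)⁻¹ * (γ μ * γ ν * Smap A) := by
    simp only [Matrix.mul_assoc]
    rw [← Matrix.mul_assoc (Smap A) ((Smap A)⁻¹) _, hS, Matrix.one_mul]
  have e2 : Matrix.trace ((Smap A)⁻¹ * (γ μ * γ ν) * Smap A) = Matrix.trace (γ μ * γ ν) := by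
    rw [Matrix.trace_mul_cycle, ← Matrix.mul_assoc, hS, Matrix.one_mul]
  have hC : (∑ ρ : Fin 4, ∑ σ : Fin 4,
      ((Λ μ ρ : ℝ) : ℂ) * ((Λ ν σ : ℝ) : ℂ) * ((4 * ηR ρ σ : ℝ) : ℂ))
      = ((4 * ηR μ ν : ℝ) : ℂ) := by
    have expand : Matrix.trace ((∑ ρ : Fin 4, ((Λ μ ρ : ℝ) : ℂ) • γ ρ) *
        (∑ σ : Fin 4, ((Λ ν σ : ℝ) : ℂ) • γ σ))
        = ∑ ρ : Fin 4, ∑ σ : Fin 4,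
            ((Λ μ ρ : ℝ) : ℂ) * ((Λ ν σ : ℝ) : ℂ) * ((4 * ηR ρ σ : ℝ) : ℂ) := by
      simp only [Finset.sum_mul, Finset.mul_sum, Matrix.trace_sum, Matrix.smul_mul,
        Matrix.mul_smul, smul_smul, Matrix.trace_smul, trγγ, smul_eq_mul]
      rw [Finset.sum_comm]
      exact Finset.sum_congr rfl fun ρ _ => Finset.sum_congr rfl fun σ _ => by ring
    rw [← expand, ← h μ, ← h ν, ← trγγ, ← e2]
    congr 1
    simp only [Matrix.mul_assoc]
    rw [← Matrix.mul_assoc (Smap A) ((Smap A)⁻¹) _, hS, Matrix.one_mul]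
  have hRe : (∑ ρ : Fin 4, ∑ σ : Fin 4, Λ μ ρ * Λ ν σ * (4 * ηR ρ σ)) = 4 * ηR μ ν := by
    have hcast : ((∑ ρ : Fin 4, ∑ σ : Fin 4, Λ μ ρ * Λ ν σ * (4 * ηR ρ σ) : ℝ) : ℂ)
        = ((4 * ηR μ ν : ℝ) : ℂ) := by push_cast; push_cast at hC; exact hC
    exact_mod_cast hcast
  have hentry : (Λ * ηR * Λᵀ) μ ν = ∑ ρ : Fin 4, ∑ σ : Fin 4, Λ μ ρ * ηR ρ σ * Λ ν σ := by
    simp [Matrix.mul_apply, Matrix.transpose_apply, Finset.sum_mul]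
    rw [Finset.sum_comm]
  have h4 : (∑ ρ : Fin 4, ∑ σ : Fin 4, Λ μ ρ * Λ ν σ * (4 * ηR ρ σ))
      = 4 * ∑ ρ : Fin 4, ∑ σ : Fin 4, Λ μ ρ * ηR ρ σ * Λ ν σ := by
    rw [Finset.mul_sum]
    refine Finset.sum_congr rfl fun ρ _ => ?_
    rw [Finset.mul_sum]
    exact Finset.sum_congr rfl fun σ _ => by ring
  rw [hentry]
  rw [h4] at hRe
  linarith

lemma lorentz_prop (A : Matrix.SpecialLinearGroup (Fin 2) ℂ)
    (Λ : Matrix (Fin 4) (Fin 4) ℝ) (h : LorentzRel A Λ) : Λᵀ * ηR * Λ = ηR := by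
  have hkey := lorentz_fwd A Λ h
  have h1 : Λ * (ηR * Λᵀ * ηR) = 1 := by
    rw [← Matrix.mul_assoc, ← Matrix.mul_assoc, hkey, etaeta]
  have h2 : (ηR * Λᵀ * ηR) * Λ = 1 := mul_eq_one_comm.mp h1
  have h3 : ηR * (Λᵀ * ηR * Λ) = 1 := by
    rw [← h2]; simp only [Matrix.mul_assoc]
  calc Λᵀ * ηR * Λ = 1 * (Λᵀ * ηR * Λ) := (Matrix.one_mul _).symm
    _ = (ηR * ηR) * (Λᵀ * ηR * Λ) := by rw [etaeta]
    _ = ηR * (ηR * (Λᵀ * ηR * Λ)) := Matrix.mul_assoc _ _ _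
    _ = ηR := by rw [h3, Matrix.mul_one]

lemma Smap_mul (A B : Matrix.SpecialLinearGroup (Fin 2) ℂ) :
    Smap (A * B) = Smap A * Smap B := by
  rw [Smap, Smap, Smap, reindex_mul]
  congr 1
  rw [Matrix.fromBlocks_multiply]
  simp [Matrix.conjTranspose_mul, Matrix.mul_inv_rev]

lemma rel_mul (A B : Matrix.SpecialLinearGroup (Fin 2) ℂ)
    (ΛA ΛB : Matrix (Fin 4) (Fin 4) ℝ)
    (hA : LorentzRel A ΛA) (hB : LorentzRel B ΛB) : LorentzRel (A * B) (ΛA * ΛB) := by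
  intro μ
  rw [Smap_mul, Matrix.mul_inv_rev]
  calc (Smap B)⁻¹ * (Smap A)⁻¹ * γ μ * (Smap A * Smap B)
      = (Smap B)⁻¹ * ((Smap A)⁻¹ * γ μ * Smap A) * Smap B := by
        simp only [Matrix.mul_assoc]
    _ = (Smap B)⁻¹ * (∑ ν : Fin 4, ((ΛA μ ν : ℝ) : ℂ) • γ ν) * Smap B := by rw [hA μ]
    _ = ∑ ν : Fin 4, ((ΛA μ ν : ℝ) : ℂ) • ((Smap B)⁻¹ * γ ν * Smap B) := by
        rw [Finset.mul_sum, Finset.sum_mul]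
        exact Finset.sum_congr rfl fun ν _ => by
          rw [Matrix.mul_smul, Matrix.smul_mul]
    _ = ∑ ν : Fin 4, ((ΛA μ ν : ℝ) : ℂ) • (∑ ρ : Fin 4, ((ΛB ν ρ : ℝ) : ℂ) • γ ρ) := by
        exact Finset.sum_congr rfl fun ν _ => by rw [hB ν]
    _ = ∑ ρ : Fin 4, (((ΛA * ΛB) μ ρ : ℝ) : ℂ) • γ ρ := by
        simp_rw [Finset.smul_sum, smul_smul]
        rw [Finset.sum_comm]
        refine Finset.sum_congr rfl fun ρ _ => ?_
        rw [← Finset.sum_smul]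
        congr 1
        rw [Matrix.mul_apply]
        push_cast
        rfl

def Λmat (A : Matrix.SpecialLinearGroup (Fin 2) ℂ) : Matrix (Fin 4) (Fin 4) ℝ :=
  Matrix.of fun μ => coeffs ((A : M2)ᴴ * σv μ * (A : M2))

lemma rel_holds (A : Matrix.SpecialLinearGroup (Fin 2) ℂ) : LorentzRel A (Λmat A) := by
  intro μ
  rw [conj_eq]
  exact block_eq_sum _ (by
    rw [Matrix.conjTranspose_mul, Matrix.conjTranspose_mul,
      Matrix.conjTranspose_conjTranspose, σherm]
    exact (Matrix.mul_assoc _ _ _).symm)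


end CovAux

/-- For every A ∈ SL(2,ℂ) there is a unique real matrix Λ(A) with
`S(A)⁻¹ γ^μ S(A) = Σ_ν Λ(A)^μ_ν γ^ν`; any such Λ satisfies `Λᵀ η Λ = η`
(it is a Lorentz transformation), and A ↦ Λ(A) is multiplicative. -/
theorem covering_homomorphism :
    (∀ A : Matrix.SpecialLinearGroup (Fin 2) ℂ, ∃! Λ : Matrix (Fin 4) (Fin 4) ℝ, LorentzRel A Λ) ∧
    (∀ (A : Matrix.SpecialLinearGroup (Fin 2) ℂ) (Λ : Matrix (Fin 4) (Fin 4) ℝ),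
      LorentzRel A Λ → Λᵀ * ηR * Λ = ηR) ∧
    (∀ (A B : Matrix.SpecialLinearGroup (Fin 2) ℂ) (ΛA ΛB : Matrix (Fin 4) (Fin 4) ℝ),
      LorentzRel A ΛA → LorentzRel B ΛB → LorentzRel (A * B) (ΛA * ΛB)) := by
  refine ⟨fun A => ⟨CovAux.Λmat A, CovAux.rel_holds A, fun Λ' h' => ?_⟩,
    fun A Λ h => CovAux.lorentz_prop A Λ h,
    fun A B ΛA ΛB hA hB => CovAux.rel_mul A B ΛA ΛB hA hB⟩
  ext μ ν
  exact congrFun (CovAux.rows_eq (Λ' μ) (CovAux.Λmat A μ)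
    ((h' μ).symm.trans (CovAux.rel_holds A μ))) ν
end
end

section
/- Anti-chronological products are the convolution inverse of chronological products: let R be a (possibly noncommutative) ring with 1, ι a type, and T a function from finite subsets of ι to R with T(∅) = 1. Define T̄(∅) = 1 and, for nonempty finite X, T̄(X) := Σ_{r=1}^{|X|} (−1)^{r+|X|} Σ T(X₁)⋯T(X_r), where the inner sum runs over all ordered partitions (X₁,…,X_r) of X into r pairwise disjoint nonempty subsets with union X. Then for every nonempty finite X ⊆ ι: Σ_{Y ⊆ X} (−1)^{|X∖Y|} T(Y) T̄(X∖Y) = 0 and Σ_{Y ⊆ X} (−1)^{|Y|} T̄(Y) T(X∖Y) = 0. -/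
open Finset
open scoped Classical

noncomputable section

/-- The anti-chronological products T̄ built from chronological products T:
`T̄(∅) = 1` and, for nonempty X,
`T̄(X) := Σ_{r=1}^{|X|} (−1)^{r+|X|} Σ_{(X₁,…,X_r)} T(X₁)⋯T(X_r)`,
the inner sum running over all ordered partitions of X into r pairwise disjoint
nonempty subsets with union X. -/
def Tbar {ι R : Type*} [Ring R] [DecidableEq ι] (T : Finset ι → R) (X : Finset ι) : R :=
  if X = ∅ then 1
  else
    ∑ r ∈ Finset.Icc 1 X.card,
      (-1 : R) ^ (r + X.card) *
        ∑ f ∈ (Fintype.piFinset fun _ : Fin r => X.powerset).filter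
            (fun f => (∀ i, (f i).Nonempty) ∧
              (∀ i j, i ≠ j → Disjoint (f i) (f j)) ∧
              Finset.univ.sup f = X),
          (List.ofFn fun i => T (f i)).prod


section Aux
variable {ι R : Type*} [Ring R] [DecidableEq ι]
variable {ι R : Type*} [Ring R] [DecidableEq ι]

def EGpart (X : Finset ι) (r : ℕ) : Finset (Fin r → Finset ι) :=
  (Fintype.piFinset fun _ : Fin r => X.powerset).filter
    (fun f => (∀ i, (f i).Nonempty) ∧
      (∀ i j, i ≠ j → Disjoint (f i) (f j)) ∧
      Finset.univ.sup f = X)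

lemma EGpart_mem {X : Finset ι} {r : ℕ} {f : Fin r → Finset ι} :
    f ∈ EGpart X r ↔ (∀ i, f i ⊆ X) ∧ (∀ i, (f i).Nonempty) ∧
      (∀ i j, i ≠ j → Disjoint (f i) (f j)) ∧ Finset.univ.sup f = X := by
  simp [EGpart, Fintype.mem_piFinset]

def EGA (T : Finset ι → R) (X : Finset ι) (r : ℕ) : R :=
  ∑ f ∈ EGpart X r, (List.ofFn fun i => T (f i)).prod

lemma sup_univ_succ {r : ℕ} (f : Fin (r + 1) → Finset ι) :
    Finset.univ.sup f = f 0 ⊔ Finset.univ.sup (Fin.tail f) := by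
  rw [Fin.univ_succ, Finset.sup_cons, Finset.sup_map]
  rfl

lemma tail_mem_EGpart {X : Finset ι} {r : ℕ} {f : Fin (r + 1) → Finset ι}
    (hf : f ∈ EGpart X (r + 1)) :
    f 0 ⊆ X ∧ (f 0).Nonempty ∧ Fin.tail f ∈ EGpart (X \ f 0) r := by
  rw [EGpart_mem] at hf
  obtain ⟨hsub, hne, hdisj, hsup⟩ := hf
  have hdisj0 : Disjoint (f 0) (Finset.univ.sup (Fin.tail f)) :=
    Finset.disjoint_sup_right.2 fun i _ => hdisj 0 i.succ (Fin.succ_ne_zero i).symm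
  have htail : Finset.univ.sup (Fin.tail f) = X \ f 0 := by
    conv_rhs => rw [← hsup, sup_univ_succ f]
    exact (Finset.union_sdiff_cancel_left hdisj0).symm
  refine ⟨hsub 0, hne 0, ?_⟩
  rw [EGpart_mem]
  refine ⟨fun i => ?_, fun i => hne i.succ,
    fun i j hij => hdisj i.succ j.succ (fun h => hij (Fin.succ_inj.1 h)), htail⟩
  rw [← htail]
  exact Finset.le_sup (f := Fin.tail f) (Finset.mem_univ i)

lemma cons_mem_EGpart {X Y : Finset ι} {r : ℕ} {g : Fin r → Finset ι}
    (hYX : Y ⊆ X) (hYne : Y.Nonempty) (hg : g ∈ EGpart (X \ Y) r) :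
    Fin.cons Y g ∈ EGpart X (r + 1) := by
  rw [EGpart_mem] at hg ⊢
  obtain ⟨hsub, hne, hdisj, hsup⟩ := hg
  have key : ∀ k : Fin r, Disjoint Y (g k) := fun k =>
    Finset.disjoint_of_subset_right (hsub k) Finset.disjoint_sdiff
  refine ⟨?_, ?_, ?_, ?_⟩
  · intro i
    induction i using Fin.cases with
    | zero => simpa using hYX
    | succ j => simpa using (hsub j).trans Finset.sdiff_subset
  · intro i
    induction i using Fin.cases with
    | zero => simpa using hYne
    | succ j => simpa using hne j
  · intro i j hij
    induction i using Fin.cases with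
    | zero =>
      induction j using Fin.cases with
      | zero => exact absurd rfl hij
      | succ j' => simpa using key j'
    | succ i' =>
      induction j using Fin.cases with
      | zero => simpa using (key i').symm
      | succ j' =>
        simpa using hdisj i' j' (fun h => hij (by rw [h]))
  · rw [sup_univ_succ, Fin.tail_cons, hsup, Fin.cons_zero]
    exact Finset.union_sdiff_of_subset hYX

lemma EGA_succ (T : Finset ι → R) (X : Finset ι) (r : ℕ) :
    EGA T X (r + 1) =
      ∑ Y ∈ X.powerset.filter (·.Nonempty), T Y * EGA T (X \ Y) r := by
  classical
  rw [EGA]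
  simp only [EGA, Finset.mul_sum]
  rw [Finset.sum_sigma']
  refine Finset.sum_bij'
    (fun f _ => (⟨f 0, Fin.tail f⟩ : Σ _ : Finset ι, Fin r → Finset ι))
    (fun p _ => Fin.cons p.1 p.2)
    ?_ ?_ ?_ ?_ ?_
  · intro f hf
    obtain ⟨h1, h2, h3⟩ := tail_mem_EGpart hf
    rw [Finset.mem_sigma, Finset.mem_filter, Finset.mem_powerset]
    exact ⟨⟨h1, h2⟩, h3⟩
  · intro p hp
    rw [Finset.mem_sigma, Finset.mem_filter, Finset.mem_powerset] at hp
    exact cons_mem_EGpart hp.1.1 hp.1.2 hp.2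
  · intro f _; exact Fin.cons_self_tail f
  · intro p _; simp
  · intro f _
    rw [List.ofFn_succ]
    simp [Fin.tail]

section More
variable (T : Finset ι → R)

lemma EGA_zero' (X : Finset ι) :
    EGA T X 0 = if X = ∅ then 1 else 0 := by
  split_ifs with h
  · subst h
    have : EGpart (∅ : Finset ι) 0 = {fun i => i.elim0} := by
      apply Finset.eq_singleton_iff_unique_mem.2
      constructor
      · rw [EGpart_mem]
        refine ⟨fun i => i.elim0, fun i => i.elim0, fun i => i.elim0, ?_⟩
        simp
      · intro f _; funext i; exact i.elim0
    simp [EGA, this]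
  · have : EGpart X 0 = ∅ := by
      apply Finset.eq_empty_of_forall_notMem
      intro f hf
      rw [EGpart_mem] at hf
      exact h (by simpa using hf.2.2.2.symm)
    simp [EGA, this]

lemma EGpart_card_le {X : Finset ι} {r : ℕ} {f : Fin r → Finset ι}
    (hf : f ∈ EGpart X r) : r ≤ X.card := by
  rw [EGpart_mem] at hf
  obtain ⟨-, hne, hdisj, hsup⟩ := hf
  have hb : (Finset.univ : Finset (Fin r)).biUnion f = X := by
    rw [← Finset.sup_eq_biUnion, hsup]
  have hcard : ∑ i, (f i).card = X.card := by
    rw [← hb, Finset.card_biUnion]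
    intro i _ j _ hij; exact hdisj i j hij
  calc r = ∑ _i : Fin r, 1 := by simp
    _ ≤ ∑ i, (f i).card := Finset.sum_le_sum fun i _ => (hne i).card_pos
    _ = X.card := hcard

lemma EGA_vanish {X : Finset ι} {r : ℕ} (h : X.card < r) :
    EGA T X r = 0 := by
  have : EGpart X r = ∅ :=
    Finset.eq_empty_of_forall_notMem fun f hf => absurd (EGpart_card_le hf) (by omega)
  simp [EGA, this]

/-- `EGB T X = (−1)^{|X|} T̄(X)`. -/
def EGB (X : Finset ι) : R :=
  ∑ r ∈ Finset.range (X.card + 1), (-1 : R) ^ r * EGA T X r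

lemma EGB_empty : EGB T (∅ : Finset ι) = 1 := by
  simp [EGB, EGA_zero']

lemma EGB_rec {X : Finset ι} (hX : X.Nonempty) :
    ∑ Y ∈ X.powerset.filter (·.Nonempty), T Y * EGB T (X \ Y) = - EGB T X := by
  have h0 : EGA T X 0 = 0 := by
    rw [EGA_zero', if_neg (Finset.nonempty_iff_ne_empty.1 hX)]
  have key : ∀ Y ∈ X.powerset.filter (·.Nonempty),
      ∑ i ∈ Finset.range X.card, (-1 : R) ^ i * EGA T (X \ Y) i = EGB T (X \ Y) := by
    intro Y hY
    rw [Finset.mem_filter, Finset.mem_powerset] at hY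
    have hlt : (X \ Y).card < X.card :=
      Finset.card_lt_card (Finset.sdiff_ssubset hY.1 hY.2)
    rw [EGB]
    refine (Finset.sum_subset ?_ ?_).symm
    · intro i hi
      rw [Finset.mem_range] at hi ⊢
      omega
    · intro i _ hi
      rw [Finset.mem_range, not_lt] at hi
      rw [EGA_vanish T (by omega), mul_zero]
  calc ∑ Y ∈ X.powerset.filter (·.Nonempty), T Y * EGB T (X \ Y)
      = ∑ Y ∈ X.powerset.filter (·.Nonempty), T Y *
          ∑ i ∈ Finset.range X.card, (-1 : R) ^ i * EGA T (X \ Y) i := by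
        refine Finset.sum_congr rfl fun Y hY => ?_
        rw [key Y hY]
    _ = ∑ i ∈ Finset.range X.card, (-1 : R) ^ i *
          ∑ Y ∈ X.powerset.filter (·.Nonempty), T Y * EGA T (X \ Y) i := by
        simp only [Finset.mul_sum]
        rw [Finset.sum_comm]
        refine Finset.sum_congr rfl fun i _ => Finset.sum_congr rfl fun Y _ => ?_
        rw [← mul_assoc, ← mul_assoc]
        congr 1
        exact (Commute.neg_one_left (T Y)).pow_left i |>.symm.eq
    _ = ∑ i ∈ Finset.range X.card, (-1 : R) ^ i * EGA T X (i + 1) := by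
        refine Finset.sum_congr rfl fun i _ => ?_
        rw [EGA_succ]
    _ = - EGB T X := by
        rw [EGB, Finset.sum_range_succ', h0, mul_zero, add_zero, ← Finset.sum_neg_distrib]
        refine Finset.sum_congr rfl fun i _ => ?_
        rw [pow_succ, mul_assoc, neg_one_mul, mul_neg, neg_neg]

lemma Tbar_eq_EGB (X : Finset ι) :
    Tbar T X = (-1 : R) ^ X.card * EGB T X := by
  by_cases h : X = ∅
  · subst h; simp [Tbar, EGB_empty]
  · rw [Tbar, if_neg h, EGB]
    have h0 : EGA T X 0 = 0 := by rw [EGA_zero', if_neg h]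
    have hins : Finset.range (X.card + 1) = insert 0 (Finset.Icc 1 X.card) := by
      ext x; simp [Nat.lt_succ_iff]; omega
    rw [hins, Finset.sum_insert (by simp), h0, mul_zero, zero_add, Finset.mul_sum]
    refine Finset.sum_congr rfl fun r _ => ?_
    rw [show r + X.card = X.card + r from add_comm _ _, pow_add, mul_assoc, EGA]
    rfl

lemma EG_first (hT : T ∅ = 1) {X : Finset ι} (hX : X.Nonempty) :
    ∑ Y ∈ X.powerset, (-1 : R) ^ (X \ Y).card * (T Y * Tbar T (X \ Y)) = 0 := by
  have step : ∀ Y ∈ X.powerset,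
      (-1 : R) ^ (X \ Y).card * (T Y * Tbar T (X \ Y)) = T Y * EGB T (X \ Y) := by
    intro Y _
    rw [Tbar_eq_EGB]
    have hc := ((Commute.neg_one_left (T Y)).pow_left ((X \ Y).card)).eq
    calc ((-1:R) ^ (X \ Y).card) * (T Y * ((-1:R) ^ (X \ Y).card * EGB T (X \ Y)))
        = ((-1:R) ^ (X \ Y).card) * ((-1:R) ^ (X \ Y).card) * (T Y * EGB T (X \ Y)) := by
          rw [← mul_assoc (T Y), ← hc, mul_assoc, ← mul_assoc]
      _ = T Y * EGB T (X \ Y) := by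
          rw [← pow_add, ← two_mul, pow_mul]
          norm_num
  rw [Finset.sum_congr rfl step]
  rw [← Finset.sum_filter_add_sum_filter_not X.powerset (· = ∅)]
  have h1 : X.powerset.filter (· = ∅) = {∅} := by
    ext Y; simp; rintro rfl; simp
  have h2 : X.powerset.filter (fun Y => ¬ Y = ∅) = X.powerset.filter (·.Nonempty) := by
    ext Y; simp [Finset.nonempty_iff_ne_empty]
  rw [h1, h2, Finset.sum_singleton, hT, one_mul, Finset.sdiff_empty, EGB_rec T hX]
  exact add_neg_cancel _


lemma myOpSum {γ M : Type*} [AddCommMonoid M] (s : Finset γ) (g : γ → M) :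
    MulOpposite.op (∑ x ∈ s, g x) = ∑ x ∈ s, MulOpposite.op (g x) :=
  map_sum MulOpposite.opAddEquiv g s

lemma reverse_ofFn {α : Type*} : ∀ {n : ℕ} (f : Fin n → α),
    (List.ofFn f).reverse = List.ofFn (fun i => f i.rev)
  | 0, f => by simp
  | n + 1, f => by
    rw [List.ofFn_succ, List.reverse_cons, reverse_ofFn (fun i => f i.succ),
      List.ofFn_succ' (fun i : Fin (n + 1) => f i.rev), List.concat_eq_append]
    simp [Fin.rev_castSucc, Fin.rev_last]

lemma rev_mem_EGpart {X : Finset ι} {r : ℕ} {f : Fin r → Finset ι}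
    (hf : f ∈ EGpart X r) : (fun i => f i.rev) ∈ EGpart X r := by
  rw [EGpart_mem] at hf ⊢
  obtain ⟨hsub, hne, hdisj, hsup⟩ := hf
  refine ⟨fun i => hsub i.rev, fun i => hne i.rev,
    fun i j hij => hdisj i.rev j.rev (fun h => hij (Fin.rev_inj.1 h)), ?_⟩
  apply le_antisymm
  · exact Finset.sup_le fun i _ => by
      rw [← hsup]; exact Finset.le_sup (f := f) (Finset.mem_univ i.rev)
  · rw [← hsup]
    refine Finset.sup_le fun i _ => ?_
    have : f i = (fun j : Fin r => f j.rev) i.rev := by simp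
    rw [this]
    exact Finset.le_sup (f := fun j : Fin r => f j.rev) (Finset.mem_univ i.rev)

lemma EGpart_sum_rev {M : Type*} [AddCommMonoid M] (X : Finset ι) (r : ℕ)
    (g : (Fin r → Finset ι) → M) :
    ∑ f ∈ EGpart X r, g (fun i => f i.rev) = ∑ f ∈ EGpart X r, g f := by
  refine Finset.sum_nbij' (fun f => fun i => f i.rev) (fun f => fun i => f i.rev)
    (fun f hf => rev_mem_EGpart hf) (fun f hf => rev_mem_EGpart hf) ?_ ?_ ?_
  · intro f _; funext i; simp
  · intro f _; funext i; simp
  · intro f _; rfl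

lemma EGA_op (T : Finset ι → R) (X : Finset ι) (r : ℕ) :
    EGA (fun Z => MulOpposite.op (T Z)) X r = MulOpposite.op (EGA T X r) := by
  rw [EGA, EGA, myOpSum, ← EGpart_sum_rev X r
    (fun f => (List.ofFn fun i => MulOpposite.op (T (f i))).prod)]
  refine Finset.sum_congr rfl fun f _ => ?_
  rw [MulOpposite.op_list_prod, List.map_ofFn, reverse_ofFn]
  rfl

lemma Tbar_op (T : Finset ι → R) (X : Finset ι) :
    Tbar (fun Z => MulOpposite.op (T Z)) X = MulOpposite.op (Tbar T X) := by
  have hre : ∀ (S : Type _) [Ring S] (T' : Finset ι → S), Tbar T' X =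
      if X = ∅ then 1 else
        ∑ r ∈ Finset.Icc 1 X.card, (-1 : S) ^ (r + X.card) * EGA T' X r := by
    intro S _ T'; rfl
  rw [hre, hre]
  by_cases h : X = ∅
  · simp [h]
  · rw [if_neg h, if_neg h, myOpSum]
    refine Finset.sum_congr rfl fun r _ => ?_
    rw [MulOpposite.op_mul, MulOpposite.op_pow, MulOpposite.op_neg, MulOpposite.op_one,
      EGA_op, ((Commute.neg_one_left (MulOpposite.op (EGA T X r))).pow_left _).symm.eq]

lemma EG_second (T : Finset ι → R) (hT : T ∅ = 1) {X : Finset ι} (hX : X.Nonempty) :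
    ∑ Y ∈ X.powerset, (-1 : R) ^ Y.card * (Tbar T Y * T (X \ Y)) = 0 := by
  set T' : Finset ι → Rᵐᵒᵖ := fun Z => MulOpposite.op (T Z) with hT'def
  have hT' : T' ∅ = 1 := by rw [hT'def]; simp [hT]
  have h := EG_first T' hT' hX
  have h2 : ∑ Y ∈ X.powerset, (-1 : Rᵐᵒᵖ) ^ Y.card * (T' (X \ Y) * Tbar T' Y) = 0 := by
    rw [← h]
    refine Finset.sum_nbij' (fun Y => X \ Y) (fun Y => X \ Y) ?_ ?_ ?_ ?_ ?_
    · intro Y _; simp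
    · intro Y _; simp
    · intro Y hY
      rw [Finset.mem_powerset] at hY
      exact Finset.sdiff_sdiff_eq_self hY
    · intro Y hY
      rw [Finset.mem_powerset] at hY
      exact Finset.sdiff_sdiff_eq_self hY
    · intro Y hY
      rw [Finset.mem_powerset] at hY
      rw [Finset.sdiff_sdiff_eq_self hY]
  rw [← MulOpposite.op_eq_zero_iff, myOpSum]
  rw [← h2]
  refine Finset.sum_congr rfl fun Y _ => ?_
  rw [MulOpposite.op_mul, MulOpposite.op_mul, MulOpposite.op_pow, MulOpposite.op_neg,
    MulOpposite.op_one, Tbar_op, ((Commute.neg_one_left _).pow_left Y.card).symm.eq]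

end More
end Aux
end

/-- Anti-chronological products are the convolution inverse of chronological products:
for every nonempty finite X, `Σ_{Y ⊆ X} (−1)^{|X∖Y|} T(Y) T̄(X∖Y) = 0` and
`Σ_{Y ⊆ X} (−1)^{|Y|} T̄(Y) T(X∖Y) = 0`. -/
theorem antichronological_convolution_inverse
    {ι R : Type*} [Ring R] [DecidableEq ι] (T : Finset ι → R) (hT : T ∅ = 1) :
    ∀ X : Finset ι, X.Nonempty →
      (∑ Y ∈ X.powerset, (-1 : R) ^ (X \ Y).card * (T Y * Tbar T (X \ Y)) = 0) ∧
      (∑ Y ∈ X.powerset, (-1 : R) ^ Y.card * (Tbar T Y * T (X \ Y)) = 0) := by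
  intro X hX
  exact ⟨EG_first T hT hX, EG_second T hT hX⟩
end
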